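/- Let n ≥ 2, let M be an n-connected binary matroid with |E(M)| ≥ 2n-2, and let T ⊆ E(M) with |T| = n-1. Then M'_T is n-connected if and only if every cocircuit Q of M intersecting T satisfies |Q| ≥ 2|Q ∩ T|. -/

import Mathlib

open Set

variable {α : Type*}

/-- The rank of a set `X` in a matroid `M`: the maximum size of an independent subset of `X`. -/
noncomputable def mrank (M : Matroid α) (X : Set α) : ℕ :=
  sSup {n | ∃ I, M.Indep I ∧ I ⊆ X ∧ I.ncard = n}

/-- `(A, B)` is a `k`-separation of `M`: a partition of the ground set with both sides of
size at least `k` and `r(A) + r(B) - r(M) ≤ k - 1` (written additively). -/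
def IsKSeparation (M : Matroid α) (k : ℕ) (A B : Set α) : Prop :=
  A ∪ B = M.E ∧ Disjoint A B ∧ k ≤ A.ncard ∧ k ≤ B.ncard ∧
    mrank M A + mrank M B + 1 ≤ mrank M M.E + k

/-- `M` is `n`-connected if it has no `k`-separation for any `k < n`. -/
def NConnected (M : Matroid α) (n : ℕ) : Prop :=
  ∀ k A B, 1 ≤ k → k < n → ¬ IsKSeparation M k A B

/-- A circuit is a minimal dependent set. -/
def MCircuit (M : Matroid α) (C : Set α) : Prop := Minimal M.Dep C

/-- A cocircuit is a circuit of the dual matroid. -/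
def MCocircuit (M : Matroid α) (C : Set α) : Prop := MCircuit M✶ C

/-- A loop is a dependent singleton. -/
def MLoop (M : Matroid α) (e : α) : Prop := M.Dep {e}

/-- A coloop is a loop of the dual, i.e. an element lying in every base. -/
def MColoop (M : Matroid α) (e : α) : Prop := M✶.Dep {e}

/-- `M` is the vector matroid of the family of vectors `φ` over `GF(2)`:
a set is independent iff it lies in the ground set and the corresponding
vectors are linearly independent. -/
def IsRep {W : Type*} [AddCommGroup W] [Module (ZMod 2) W] (M : Matroid α) (φ : α → W) : Prop :=
  ∀ I : Set α, M.Indep I ↔ I ⊆ M.E ∧ LinearIndependent (ZMod 2) (I.restrict φ)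

open scoped Classical in
/-- The columns of the element splitting matrix `A'_T`: each original column gets an extra
coordinate (the new row), equal to `1` exactly on the columns labelled by `T`, and a new
column `a` which is `1` in the new row and `0` elsewhere. -/
noncomputable def splitRep {W : Type*} [AddCommGroup W] [Module (ZMod 2) W]
    (φ : α → W) (T : Set α) (a : α) : α → W × ZMod 2 :=
  fun x => if x = a then (0, 1) else (φ x, if x ∈ T then 1 else 0)

/-- `N` is the element splitting matroid `M'_T` of the binary matroid `M` (represented by `φ`)
with respect to `T`, with new element `a`. -/
def IsEleSplit {W : Type*} [AddCommGroup W] [Module (ZMod 2) W]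
    (M : Matroid α) (φ : α → W) (T : Set α) (a : α) (N : Matroid α) : Prop :=
  a ∉ M.E ∧ N.E = insert a M.E ∧ IsRep N (splitRep φ T a)

/-- `M` is the contraction `N / a` of the single element `a` from `N`. -/
def ContractElemEq (N : Matroid α) (a : α) (M : Matroid α) : Prop :=
  M.E = N.E \ {a} ∧ ∀ I : Set α,
    M.Indep I ↔ a ∉ I ∧
      ((N.Indep {a} ∧ N.Indep (insert a I)) ∨ (¬ N.Indep {a} ∧ N.Indep I))


open Set Submodule

section Aux
variable {α : Type*} {W : Type*} [AddCommGroup W] [Module (ZMod 2) W]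

lemma ES.two_cases (c : ZMod 2) : c = 0 ∨ c = 1 := by revert c; decide

lemma ES.restrict_li_iff {φ : α → W} {J : Set α} :
    LinearIndependent (ZMod 2) (J.restrict φ) ↔
      Set.InjOn φ J ∧ LinearIndependent (ZMod 2) ((↑) : (φ '' J) → W) := by
  constructor
  · intro h
    have hinj : Set.InjOn φ J := by
      intro x hx y hy hxy
      have : (⟨x, hx⟩ : J) = ⟨y, hy⟩ := h.injective hxy
      exact congrArg Subtype.val this
    exact ⟨hinj, (linearIndepOn_iff_image hinj).mp h⟩
  · rintro ⟨hinj, h⟩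
    exact (linearIndepOn_iff_image hinj).mpr h

lemma ES.exists_functional {V : Type*} [AddCommGroup V] [Module (ZMod 2) V]
    {U : Submodule (ZMod 2) V} {v : V} (hv : v ∉ U) :
    ∃ f : V →ₗ[ZMod 2] ZMod 2, (∀ u ∈ U, f u = 0) ∧ f v = 1 := by
  have hv' : U.mkQ v ≠ 0 := by
    simpa [Submodule.Quotient.mk_eq_zero] using hv
  obtain ⟨q, hq⟩ := Submodule.exists_isCompl (span (ZMod 2) {U.mkQ v})
  let e := LinearEquiv.toSpanNonzeroSingleton (ZMod 2) (V ⧸ U) (U.mkQ v) hv'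
  let pr := Submodule.linearProjOfIsCompl _ q hq
  refine ⟨(e.symm.toLinearMap.comp pr).comp U.mkQ, ?_, ?_⟩
  · intro u hu
    have : U.mkQ u = 0 := (Submodule.Quotient.mk_eq_zero U).mpr hu
    simp [this]
  · have h1 : pr (U.mkQ v) = ⟨U.mkQ v, Submodule.mem_span_singleton_self _⟩ :=
      Submodule.linearProjOfIsCompl_apply_left hq ⟨U.mkQ v, Submodule.mem_span_singleton_self _⟩
    have h2 : e 1 = ⟨U.mkQ v, Submodule.mem_span_singleton_self _⟩ := by
      exact LinearEquiv.toSpanNonzeroSingleton_one (R := ZMod 2) (M := V ⧸ U) (x := U.mkQ v) (h := hv')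
    simp only [LinearMap.comp_apply, LinearEquiv.coe_toLinearMap, h1, ← h2,
      LinearEquiv.symm_apply_apply]

lemma ES.mrank_eq {M : Matroid α} {φ : α → W} (hM : IsRep M φ) {X : Set α}
    (hXE : X ⊆ M.E) (hX : X.Finite) :
    mrank M X = Module.finrank (ZMod 2) (span (ZMod 2) (φ '' X)) := by
  classical
  set r := Module.finrank (ZMod 2) (span (ZMod 2) (φ '' X)) with hr
  haveI : FiniteDimensional (ZMod 2) (span (ZMod 2) (φ '' X)) :=
    FiniteDimensional.span_of_finite _ (hX.image φ)
  set S : Set ℕ := {n | ∃ I, M.Indep I ∧ I ⊆ X ∧ I.ncard = n} with hS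
  have hub : ∀ m ∈ S, m ≤ r := by
    rintro m ⟨I, hI, hIX, rfl⟩
    have hIfin : I.Finite := hX.subset hIX
    have hli := ((hM I).mp hI).2
    haveI := hIfin.fintype
    have h1 : Module.finrank (ZMod 2) (span (ZMod 2) (Set.range (I.restrict φ)))
        = Fintype.card I := finrank_span_eq_card hli
    rw [show Set.range (I.restrict φ) = φ '' I from (Set.image_eq_range φ I).symm] at h1
    have h2 : span (ZMod 2) (φ '' I) ≤ span (ZMod 2) (φ '' X) :=
      span_mono (Set.image_mono hIX)
    have h3 := Submodule.finrank_mono h2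
    rw [h1] at h3
    rwa [Set.ncard_eq_toFinset_card', Set.toFinset_card]
  have hmem : r ∈ S := by
    obtain ⟨s, hs_sub, hs_span, hs_li⟩ := exists_linearIndependent (ZMod 2) (φ '' X)
    rcases Set.eq_empty_or_nonempty s with rfl | hsne
    · have hr0 : r = 0 := by
        rw [hr, ← hs_span, Submodule.span_empty, finrank_bot]
      refine ⟨∅, (hM ∅).mpr ⟨Set.empty_subset _, ?_⟩, Set.empty_subset _, by simp [hr0]⟩
      exact linearIndependent_empty_type
    obtain ⟨y0, hy0⟩ := hsne
    obtain ⟨a0, -, -⟩ := hs_sub hy0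
    haveI : Nonempty α := ⟨a0⟩
    set inv := Function.invFunOn φ X with hinv
    have hy : ∀ y ∈ s, ∃ a ∈ X, φ a = y := by
      intro y hys
      obtain ⟨a, ha, rfl⟩ := hs_sub hys
      exact ⟨a, ha, rfl⟩
    have hphiinv : ∀ y ∈ s, φ (inv y) = y := fun y hys => Function.invFunOn_eq (hy y hys)
    set I := inv '' s with hI
    have hIX : I ⊆ X := by
      rintro _ ⟨y, hys, rfl⟩
      exact Function.invFunOn_mem (hy y hys)
    have himg : φ '' I = s := by
      rw [hI, Set.image_image]
      exact Set.image_congr hphiinv ▸ Set.image_id s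
    have hinj : Set.InjOn φ I := by
      rintro _ ⟨y1, hy1, rfl⟩ _ ⟨y2, hy2, rfl⟩ h
      rw [hphiinv y1 hy1, hphiinv y2 hy2] at h
      rw [h]
    have hinvinj : Set.InjOn inv s := by
      intro y1 hy1 y2 hy2 h
      rw [← hphiinv y1 hy1, ← hphiinv y2 hy2, h]
    have hsfin : s.Finite := (hX.image φ).subset hs_sub
    haveI := hsfin.fintype
    have hcard : I.ncard = r := by
      rw [hI, Set.ncard_image_of_injOn hinvinj, hr, ← hs_span,
        finrank_span_set_eq_card hs_li, Set.ncard_eq_toFinset_card']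
    refine ⟨I, (hM I).mpr ⟨hIX.trans hXE, ?_⟩, hIX, hcard⟩
    exact ES.restrict_li_iff.mpr ⟨hinj, himg ▸ hs_li⟩
  show sSup S = r
  exact le_antisymm (csSup_le ⟨r, hmem⟩ hub) (le_csSup ⟨r, hub⟩ hmem)

lemma ES.ker_fst_eq : LinearMap.ker (LinearMap.fst (ZMod 2) W (ZMod 2))
    = span (ZMod 2) {((0 : W), (1 : ZMod 2))} := by
  apply le_antisymm
  · intro x hx
    rw [LinearMap.mem_ker, LinearMap.fst_apply] at hx
    rw [Submodule.mem_span_singleton]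
    refine ⟨x.2, ?_⟩
    rw [Prod.smul_mk, smul_zero, smul_eq_mul, mul_one]
    exact Prod.ext hx.symm rfl
  · rw [Submodule.span_singleton_le_iff_mem, LinearMap.mem_ker, LinearMap.fst_apply]

open scoped Classical in
lemma ES.finrank_span_prod {S : Set (W × ZMod 2)} (hS : S.Finite) :
    Module.finrank (ZMod 2) (span (ZMod 2) S) =
      Module.finrank (ZMod 2) (span (ZMod 2) (Prod.fst '' S)) +
        (if ((0 : W), (1 : ZMod 2)) ∈ span (ZMod 2) S then 1 else 0) := by
  haveI : FiniteDimensional (ZMod 2) (span (ZMod 2) S) :=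
    FiniteDimensional.span_of_finite _ hS
  set U := span (ZMod 2) S with hU
  set F := LinearMap.fst (ZMod 2) W (ZMod 2) with hF
  set f := F.domRestrict U with hf
  have hrn := LinearMap.finrank_range_add_finrank_ker f
  set m := U ⊓ LinearMap.ker F with hm
  have hrange : LinearMap.range f = span (ZMod 2) (Prod.fst '' S) := by
    rw [hf, LinearMap.domRestrict, LinearMap.range_comp, Submodule.range_subtype, hU,
      Submodule.map_span]
    rfl
  have hkerf : LinearMap.ker f = Submodule.comap U.subtype m := by
    rw [hf, LinearMap.ker_domRestrict]
    ext x
    simp [hm, x.2]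
  have hkerfr : Module.finrank (ZMod 2) (LinearMap.ker f) = Module.finrank (ZMod 2) m := by
    rw [hkerf]
    exact LinearEquiv.finrank_eq (Submodule.comapSubtypeEquivOfLe (inf_le_left : m ≤ U))
  have hmval : Module.finrank (ZMod 2) m
      = if ((0 : W), (1 : ZMod 2)) ∈ U then 1 else 0 := by
    by_cases h : ((0 : W), (1 : ZMod 2)) ∈ U
    · rw [if_pos h]
      have hme : m = span (ZMod 2) {((0 : W), (1 : ZMod 2))} := by
        apply le_antisymm
        · exact le_trans inf_le_right (le_of_eq ES.ker_fst_eq)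
        · exact le_inf ((Submodule.span_singleton_le_iff_mem _ _).mpr h)
            (le_of_eq ES.ker_fst_eq.symm)
      rw [hme]
      exact finrank_span_singleton (by simp)
    · rw [if_neg h]
      have hme : m = ⊥ := by
        rw [eq_bot_iff]
        intro x hx
        have hx2 : x ∈ span (ZMod 2) {((0 : W), (1 : ZMod 2))} := ES.ker_fst_eq (W := W) ▸ hx.2
        rw [Submodule.mem_span_singleton] at hx2
        obtain ⟨cc, rfl⟩ := hx2
        rcases ES.two_cases cc with rfl | rfl
        · simp
        · rw [one_smul] at hx
          exact absurd hx.1 h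
      rw [hme, finrank_bot]
  rw [← hrange, ← hmval, ← hkerfr]
  exact hrn.symm

lemma ES.indep_insert {M : Matroid α} {φ : α → W} (hM : IsRep M φ) {J : Set α} (hJ : M.Indep J)
    {x : α} (hx : x ∈ M.E) (hxs : φ x ∉ span (ZMod 2) (φ '' J)) : M.Indep (insert x J) := by
  obtain ⟨hJE, hli⟩ := (hM J).mp hJ
  obtain ⟨hinj, hset⟩ := ES.restrict_li_iff.mp hli
  have hxJ : φ x ∉ φ '' J := fun h => hxs (Submodule.subset_span h)
  have hins : LinearIndependent (ZMod 2) ((↑) : (insert (φ x) (φ '' J) : Set W) → W) :=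
    (linearIndepOn_id_insert hxJ).mpr ⟨hset, hxs⟩
  refine (hM _).mpr ⟨Set.insert_subset hx hJE, ES.restrict_li_iff.mpr ⟨?_, ?_⟩⟩
  · intro u hu w hw huw
    rcases hu with rfl | hu <;> rcases hw with rfl | hw
    · rfl
    · exact absurd (huw ▸ Set.mem_image_of_mem φ hw) hxJ
    · exact absurd (huw ▸ Set.mem_image_of_mem φ hu) hxJ
    · exact hinj hu hw huw
  · rw [Set.image_insert_eq]
    exact hins

lemma ES.not_mem_span_diff {M : Matroid α} {φ : α → W} (hM : IsRep M φ) {J : Set α}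
    (hJ : M.Indep J) {y : α} (hy : y ∈ J) :
    φ y ∉ span (ZMod 2) (φ '' (J \ {y})) := by
  obtain ⟨hJE, hli⟩ := (hM J).mp hJ
  obtain ⟨hinj, hset⟩ := ES.restrict_li_iff.mp hli
  have h1 : φ y ∉ (φ '' J) \ {φ y} := fun h => h.2 rfl
  have h2 : insert (φ y) ((φ '' J) \ {φ y}) = φ '' J := by
    rw [Set.insert_diff_singleton, Set.insert_eq_self.mpr (Set.mem_image_of_mem φ hy)]
  have h3 : LinearIndependent (ZMod 2) ((↑) : (insert (φ y) ((φ '' J) \ {φ y}) : Set W) → W) := by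
    rw [h2]; exact hset
  have h4 := ((linearIndepOn_id_insert h1).mp h3).2
  intro hmem
  apply h4
  refine span_mono ?_ hmem
  rintro _ ⟨u, ⟨huJ, huy⟩, rfl⟩
  exact ⟨Set.mem_image_of_mem φ huJ, fun he => huy (hinj huJ hy he)⟩

lemma ES.base_span {M : Matroid α} {φ : α → W} (hM : IsRep M φ) {B : Set α} (hB : M.IsBase B) :
    span (ZMod 2) (φ '' B) = span (ZMod 2) (φ '' M.E) := by
  refine le_antisymm (span_mono (Set.image_mono hB.subset_ground)) (span_le.mpr ?_)
  rintro _ ⟨x, hx, rfl⟩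
  by_contra hxs
  have hind := ES.indep_insert hM hB.indep hx hxs
  have hxB := hB.mem_of_insert_indep hind
  exact hxs (Submodule.subset_span (Set.mem_image_of_mem φ hxB))

lemma ES.coindep_iff_span {M : Matroid α} {φ : α → W} (hM : IsRep M φ) {X : Set α}
    (hX : X ⊆ M.E) :
    M✶.Indep X ↔ span (ZMod 2) (φ '' (M.E \ X)) = span (ZMod 2) (φ '' M.E) := by
  constructor
  · intro h
    obtain ⟨-, B, hB, hdisj⟩ := Matroid.dual_indep_iff_exists'.mp h
    refine le_antisymm (span_mono (Set.image_mono Set.diff_subset)) ?_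
    rw [← ES.base_span hM hB]
    exact span_mono (Set.image_mono (Set.subset_diff.mpr ⟨hB.subset_ground, hdisj.symm⟩))
  · intro h
    obtain ⟨I, hI⟩ := M.exists_isBasis (M.E \ X) Set.diff_subset
    have hspanI : span (ZMod 2) (φ '' I) = span (ZMod 2) (φ '' M.E) := by
      refine le_antisymm (span_mono (Set.image_mono (hI.subset.trans Set.diff_subset))) ?_
      rw [← h]
      refine span_le.mpr ?_
      rintro _ ⟨y, hyd, rfl⟩
      by_contra hys
      have hind := ES.indep_insert hM hI.indep (Set.diff_subset hyd : y ∈ M.E) hys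
      have := hI.mem_of_insert_indep hyd hind
      exact hys (Submodule.subset_span (Set.mem_image_of_mem φ this))
    have hIbase : M.IsBase I := by
      rw [Matroid.isBase_iff_maximal_indep]
      refine ⟨hI.indep, fun J hJ hIJ => ?_⟩
      intro y hyJ
      by_contra hyI
      have hyE : y ∈ M.E := hJ.subset_ground hyJ
      have h1 : φ y ∈ span (ZMod 2) (φ '' I) := by
        rw [hspanI]; exact Submodule.subset_span (Set.mem_image_of_mem φ hyE)
      have h2 : span (ZMod 2) (φ '' I) ≤ span (ZMod 2) (φ '' (J \ {y})) := by
        refine span_mono (Set.image_mono ?_)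
        intro u hu
        exact ⟨hIJ hu, fun he => hyI (he ▸ hu)⟩
      exact ES.not_mem_span_diff hM hJ hyJ (h2 h1)
    exact Matroid.dual_indep_iff_exists'.mpr
      ⟨hX, I, hIbase, (Set.subset_diff.mp hI.subset).2.symm⟩

lemma ES.cocircuit_functional {M : Matroid α} {φ : α → W} (hM : IsRep M φ)
    {Q : Set α} (hQ : MCocircuit M Q) :
    Q.Nonempty ∧ Q ⊆ M.E ∧
      ∃ g : W →ₗ[ZMod 2] ZMod 2, ∀ x ∈ M.E, (g (φ x) = 1 ↔ x ∈ Q) := by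
  have hdep : M✶.Dep Q := hQ.1
  have hQE : Q ⊆ M.E := by
    have := hdep.subset_ground; rwa [Matroid.dual_ground] at this
  have hQne : Q.Nonempty := by
    rcases Q.eq_empty_or_nonempty with rfl | h
    · exact absurd M✶.empty_indep hdep.1
    · exact h
  have hcoind : ∀ q ∈ Q, M✶.Indep (Q \ {q}) := by
    intro q hq
    by_contra hind
    have hdep' : M✶.Dep (Q \ {q}) :=
      ⟨hind, fun x hx => by rw [Matroid.dual_ground]; exact hQE hx.1⟩
    have h2 := hQ.2 hdep' (Set.diff_subset : Q \ {q} ⊆ Q)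
    exact (h2 hq).2 rfl
  have hHV : span (ZMod 2) (φ '' (M.E \ Q)) ≠ span (ZMod 2) (φ '' M.E) := by
    intro h
    exact hdep.1 ((ES.coindep_iff_span hM hQE).mpr h)
  have hsup : ∀ q ∈ Q, (ZMod 2 ∙ (φ q)) ⊔ span (ZMod 2) (φ '' (M.E \ Q))
      = span (ZMod 2) (φ '' M.E) := by
    intro q hq
    have h1 := (ES.coindep_iff_span hM ((Set.diff_subset).trans hQE : Q \ {q} ⊆ M.E)).mp
      (hcoind q hq)
    have h2 : M.E \ (Q \ {q}) = insert q (M.E \ Q) := by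
      ext x
      simp only [Set.mem_diff, Set.mem_insert_iff, Set.mem_singleton_iff]
      constructor
      · rintro ⟨hxE, hx⟩
        by_cases hxq : x = q
        · exact Or.inl hxq
        · exact Or.inr ⟨hxE, fun hxQ => hx ⟨hxQ, hxq⟩⟩
      · rintro (rfl | ⟨hxE, hxQ⟩)
        · exact ⟨hQE hq, fun h => h.2 rfl⟩
        · exact ⟨hxE, fun h => hxQ h.1⟩
    rw [h2, Set.image_insert_eq, Submodule.span_insert] at h1
    exact h1
  have hnot : ∀ q ∈ Q, φ q ∉ span (ZMod 2) (φ '' (M.E \ Q)) := by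
    intro q hq hmem
    apply hHV
    rw [← hsup q hq, sup_eq_right.mpr ((Submodule.span_singleton_le_iff_mem _ _).mpr hmem)]
  obtain ⟨q0, hq0⟩ := hQne
  obtain ⟨f, hf0, hf1⟩ := ES.exists_functional (hnot q0 hq0)
  refine ⟨⟨q0, hq0⟩, hQE, f, ?_⟩
  intro x hxE
  by_cases hxQ : x ∈ Q
  · refine ⟨fun _ => hxQ, fun _ => ?_⟩
    have hv : φ x ∈ span (ZMod 2) (φ '' M.E) :=
      Submodule.subset_span (Set.mem_image_of_mem φ hxE)
    rw [← hsup q0 hq0, Submodule.mem_sup] at hv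
    obtain ⟨y, hy, z, hz, hsum⟩ := hv
    rw [Submodule.mem_span_singleton] at hy
    obtain ⟨cc, rfl⟩ := hy
    rcases ES.two_cases cc with rfl | rfl
    · rw [zero_smul, zero_add] at hsum
      exact absurd (hsum ▸ hz) (hnot x hxQ)
    · rw [one_smul] at hsum
      have : f (φ x) = f (φ q0) + f z := by rw [← hsum, map_add]
      rw [this, hf1, hf0 z hz, add_zero]
  · have h0 : f (φ x) = 0 := hf0 _ (Submodule.subset_span (Set.mem_image_of_mem φ ⟨hxE, hxQ⟩))
    rw [h0]
    exact iff_of_false (by decide) hxQ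

lemma ES.cocycle_bound {M : Matroid α} {φ : α → W} (hM : IsRep M φ) (hfin : M.E.Finite)
    {T : Set α}
    (hRHS : ∀ Q, MCocircuit M Q → (Q ∩ T).Nonempty → 2 * (Q ∩ T).ncard ≤ Q.ncard) :
    ∀ (m : ℕ) (D : Set α), D.ncard = m → D ⊆ M.E →
      (∃ g : W →ₗ[ZMod 2] ZMod 2, ∀ x ∈ M.E, (g (φ x) = 1 ↔ x ∈ D)) →
      2 * (D ∩ T).ncard ≤ D.ncard := by
  classical
  intro m
  induction m using Nat.strong_induction_on with
  | _ m IH =>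
    rintro D hm hDE ⟨g, hg⟩
    rcases D.eq_empty_or_nonempty with rfl | hne
    · simp
    have hdfin : D.Finite := hfin.subset hDE
    have hdep : M✶.Dep D := by
      refine ⟨fun hind => ?_, by rw [Matroid.dual_ground]; exact hDE⟩
      rw [ES.coindep_iff_span hM hDE] at hind
      obtain ⟨d, hd⟩ := hne
      have h2 : span (ZMod 2) (φ '' (M.E \ D)) ≤ LinearMap.ker g := by
        rw [span_le]
        rintro _ ⟨x, hx, rfl⟩
        rcases ES.two_cases (g (φ x)) with h | h
        · exact h
        · exact absurd ((hg x hx.1).mp h) hx.2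
      have h3 : φ d ∈ LinearMap.ker g := by
        apply h2
        rw [hind]
        exact Submodule.subset_span (Set.mem_image_of_mem φ (hDE hd))
      rw [LinearMap.mem_ker] at h3
      rw [(hg d (hDE hd)).mpr hd] at h3
      exact one_ne_zero h3
    -- find a cocircuit inside D
    have hSfin : {C | C ⊆ D ∧ M✶.Dep C}.Finite := by
      refine (hdfin.powerset).subset ?_
      intro C hC
      exact hC.1
    obtain ⟨Q, hQS, hQmin⟩ := Set.Finite.exists_minimalFor id _ hSfin ⟨D, subset_rfl, hdep⟩
    have hQD : Q ⊆ D := hQS.1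
    have hQcc : MCocircuit M Q := by
      refine ⟨hQS.2, fun C' hC' hle => ?_⟩
      exact hQmin ⟨hle.trans hQD, hC'⟩ hle
    obtain ⟨hQne, hQE, gQ, hgQ⟩ := ES.cocircuit_functional hM hQcc
    set D' := D \ Q with hD'
    have hgx : ∀ x ∈ M.E, g (φ x) = (if x ∈ D then 1 else 0) := by
      intro x hx
      split_ifs with h
      · exact (hg x hx).mpr h
      · rcases ES.two_cases (g (φ x)) with h0 | h1
        · exact h0
        · exact absurd ((hg x hx).mp h1) h
    have hgQx : ∀ x ∈ M.E, gQ (φ x) = (if x ∈ Q then 1 else 0) := by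
      intro x hx
      split_ifs with h
      · exact (hgQ x hx).mpr h
      · rcases ES.two_cases (gQ (φ x)) with h0 | h1
        · exact h0
        · exact absurd ((hgQ x hx).mp h1) h
    have hg' : ∀ x ∈ M.E, ((g + gQ) (φ x) = 1 ↔ x ∈ D') := by
      intro x hx
      rw [LinearMap.add_apply, hgx x hx, hgQx x hx]
      by_cases hxQ : x ∈ Q
      · rw [if_pos hxQ, if_pos (hQD hxQ)]
        exact iff_of_false (by decide) (fun hmem => hmem.2 hxQ)
      · by_cases hxD : x ∈ D
        · rw [if_pos hxD, if_neg hxQ, add_zero]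
          exact iff_of_true rfl ⟨hxD, hxQ⟩
        · rw [if_neg hxD, if_neg hxQ, add_zero]
          exact iff_of_false (by decide) (fun hmem => hxD hmem.1)
    have hQfin : Q.Finite := hdfin.subset hQD
    have hQpos : 0 < Q.ncard := (Set.ncard_pos hQfin).mpr hQne
    have hcard : (D \ Q).ncard + Q.ncard = D.ncard :=
      Set.ncard_diff_add_ncard_of_subset hQD hdfin
    have hIH := IH (D \ Q).ncard (by omega) (D \ Q) rfl
      ((Set.diff_subset).trans hDE) ⟨g + gQ, hg'⟩
    have hQT : 2 * (Q ∩ T).ncard ≤ Q.ncard := by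
      rcases (Q ∩ T).eq_empty_or_nonempty with he | hne'
      · rw [he]; simp
      · exact hRHS Q hQcc hne'
    have hsplit : (D ∩ T).ncard = ((D \ Q) ∩ T).ncard + (Q ∩ T).ncard := by
      have hdis : Disjoint ((D \ Q) ∩ T) (Q ∩ T) := by
        refine Set.disjoint_left.mpr ?_
        rintro x ⟨⟨-, hxQ⟩, -⟩ ⟨hxQ', -⟩
        exact hxQ hxQ'
      have hun : (D ∩ T) = ((D \ Q) ∩ T) ∪ (Q ∩ T) := by
        ext x
        constructor
        · rintro ⟨hxD, hxT⟩
          by_cases hxQ : x ∈ Q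
          · exact Or.inr ⟨hxQ, hxT⟩
          · exact Or.inl ⟨⟨hxD, hxQ⟩, hxT⟩
        · rintro (⟨⟨hxD, -⟩, hxT⟩ | ⟨hxQ, hxT⟩)
          · exact ⟨hxD, hxT⟩
          · exact ⟨hQD hxQ, hxT⟩
      rw [hun, Set.ncard_union_eq hdis ((hdfin.subset Set.diff_subset).inter_of_left _)
        (hQfin.inter_of_left _)]
    omega


lemma ES.ncard_symmdiff {D T : Set α} (hD : D.Finite) (hT : T.Finite) :
    D.ncard + T.ncard = ((D \ T) ∪ (T \ D)).ncard + 2 * (D ∩ T).ncard := by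
  have h1 := Set.ncard_inter_add_ncard_diff_eq_ncard D T hD
  have h2 := Set.ncard_inter_add_ncard_diff_eq_ncard T D hT
  have hdis : Disjoint (D \ T) (T \ D) := by
    refine Set.disjoint_left.mpr ?_
    rintro x ⟨-, hx⟩ ⟨hx', -⟩
    exact hx hx'
  have h3 := Set.ncard_union_eq hdis (hD.subset Set.diff_subset) (hT.subset Set.diff_subset)
  have h4 : (T ∩ D).ncard = (D ∩ T).ncard := by rw [Set.inter_comm]
  omega

open scoped Classical in
lemma ES.splitRep_mem {φ : α → W} {T : Set α} {a : α} {x : α} (hxa : x ≠ a) :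
    splitRep φ T a x = (φ x, if x ∈ T then 1 else 0) := by
  simp [splitRep, hxa]

lemma ES.splitRep_a {φ : α → W} {T : Set α} {a : α} : splitRep φ T a a = (0, 1) := by
  simp [splitRep]

lemma ES.fst_image {φ : α → W} {T : Set α} {a : α} {X : Set α} (hX : ∀ x ∈ X, x ≠ a) :
    Prod.fst '' (splitRep φ T a '' X) = φ '' X := by
  classical
  rw [Set.image_image]
  apply Set.image_congr
  intro x hx
  rw [ES.splitRep_mem (hX x hx)]

open scoped Classical in
lemma ES.mrankN_subset {M N : Matroid α} {φ : α → W} {T : Set α} {a : α}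
    (hfin : M.E.Finite) (hN : IsEleSplit M φ T a N) {X : Set α} (hX : X ⊆ M.E) :
    mrank N X = Module.finrank (ZMod 2) (span (ZMod 2) (φ '' X)) +
      (if ((0 : W), (1 : ZMod 2)) ∈ span (ZMod 2) (splitRep φ T a '' X) then 1 else 0) := by
  obtain ⟨haE, hNE, hNrep⟩ := hN
  have hXfin : X.Finite := hfin.subset hX
  have hXNE : X ⊆ N.E := by rw [hNE]; exact hX.trans (Set.subset_insert a M.E)
  rw [ES.mrank_eq hNrep hXNE hXfin, ES.finrank_span_prod (hXfin.image _),
    ES.fst_image (fun x hx hxa => haE (by rw [← hxa]; exact hX hx))]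

lemma ES.mrankN_insert {M N : Matroid α} {φ : α → W} {T : Set α} {a : α}
    (hfin : M.E.Finite) (hN : IsEleSplit M φ T a N) {X : Set α} (hX : X ⊆ M.E) :
    mrank N (insert a X) = Module.finrank (ZMod 2) (span (ZMod 2) (φ '' X)) + 1 := by
  obtain ⟨haE, hNE, hNrep⟩ := hN
  have hXfin : X.Finite := hfin.subset hX
  have hXNE : insert a X ⊆ N.E := by
    rw [hNE]
    exact Set.insert_subset_insert (hX.trans (subset_refl _))
  have himg : splitRep φ T a '' (insert a X)
      = insert ((0 : W), (1 : ZMod 2)) (splitRep φ T a '' X) := by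
    rw [Set.image_insert_eq, ES.splitRep_a]
  rw [ES.mrank_eq hNrep hXNE (hXfin.insert a), himg,
    ES.finrank_span_prod ((hXfin.image _).insert _)]
  have hmem : ((0 : W), (1 : ZMod 2)) ∈
      span (ZMod 2) (insert ((0 : W), (1 : ZMod 2)) (splitRep φ T a '' X)) :=
    Submodule.subset_span (Set.mem_insert _ _)
  rw [if_pos hmem]
  congr 1
  rw [Set.image_insert_eq]
  show Module.finrank (ZMod 2)
      (span (ZMod 2) (insert (0 : W) (Prod.fst '' (splitRep φ T a '' X)))) = _
  rw [Submodule.span_insert_zero, ES.fst_image (fun x hx hxa => haE (by rw [← hxa]; exact hX hx))]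

lemma ES.finrank_le_ncard {φ : α → W} {X : Set α} (hX : X.Finite) :
    Module.finrank (ZMod 2) (span (ZMod 2) (φ '' X)) ≤ X.ncard := by
  haveI := (hX.image φ).fintype
  calc Module.finrank (ZMod 2) (span (ZMod 2) (φ '' X)) ≤ (φ '' X).toFinset.card :=
        finrank_span_le_card _
    _ = (φ '' X).ncard := (Set.ncard_eq_toFinset_card' _).symm
    _ ≤ X.ncard := Set.ncard_image_le hX

lemma ES.finrank_union_le {φ : α → W} {A B : Set α} (hA : A.Finite) (hB : B.Finite) :
    Module.finrank (ZMod 2) (span (ZMod 2) (φ '' (A ∪ B))) ≤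
      Module.finrank (ZMod 2) (span (ZMod 2) (φ '' A)) +
        Module.finrank (ZMod 2) (span (ZMod 2) (φ '' B)) := by
  haveI : FiniteDimensional (ZMod 2) (span (ZMod 2) (φ '' A)) :=
    FiniteDimensional.span_of_finite _ (hA.image φ)
  haveI : FiniteDimensional (ZMod 2) (span (ZMod 2) (φ '' B)) :=
    FiniteDimensional.span_of_finite _ (hB.image φ)
  rw [Set.image_union, Submodule.span_union]
  have := Submodule.finrank_sup_add_finrank_inf_eq
    (span (ZMod 2) (φ '' A)) (span (ZMod 2) (φ '' B))
  omega

lemma ES.sep_symm {M : Matroid α} {k : ℕ} {A B : Set α} (h : IsKSeparation M k A B) :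
    IsKSeparation M k B A := by
  obtain ⟨h1, h2, h3, h4, h5⟩ := h
  exact ⟨by rw [Set.union_comm]; exact h1, h2.symm, h4, h3,
    by rw [Nat.add_comm (mrank M B)]; exact h5⟩

end Aux


/-- M'_T is n-connected if and only if every cocircuit Q of M intersecting T satisfies
|Q| ≥ 2|Q ∩ T|. -/
theorem eleSplit_nConnected_iff_cocircuit_cond {α W : Type*}
    [AddCommGroup W] [Module (ZMod 2) W]
    (n : ℕ) (hn : 2 ≤ n) (M N : Matroid α) (φ : α → W) (hM : IsRep M φ)
    (hfin : M.E.Finite) (hcard : 2 * n - 2 ≤ M.E.ncard) (hconn : NConnected M n)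
    (T : Set α) (hT : T ⊆ M.E) (hTcard : T.ncard = n - 1)
    (a : α) (hN : IsEleSplit M φ T a N) :
    NConnected N n ↔
      ∀ Q : Set α, MCocircuit M Q → (Q ∩ T).Nonempty → 2 * (Q ∩ T).ncard ≤ Q.ncard := by
  classical
  have haE : a ∉ M.E := hN.1
  have hNE : N.E = insert a M.E := hN.2.1
  have hTfin : T.Finite := hfin.subset hT
  haveI : FiniteDimensional (ZMod 2) (span (ZMod 2) (φ '' M.E)) :=
    FiniteDimensional.span_of_finite _ (hfin.image φ)
  have hrkE : ∀ X : Set α, X ⊆ M.E →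
      Module.finrank (ZMod 2) (span (ZMod 2) (φ '' X)) ≤
        Module.finrank (ZMod 2) (span (ZMod 2) (φ '' M.E)) := by
    intro X hX
    exact Submodule.finrank_mono (span_mono (Set.image_mono hX))
  constructor
  · -- forward direction
    intro hNconn Q hQcc hQTne
    by_contra hlt
    push_neg at hlt
    obtain ⟨hQne, hQE, g, hg⟩ := ES.cocircuit_functional hM hQcc
    set B' := (Q \ T) ∪ (T \ Q) with hB'
    have hB'E : B' ⊆ M.E :=
      Set.union_subset (Set.diff_subset.trans hQE) (Set.diff_subset.trans hT)
    have hB'fin : B'.Finite := hfin.subset hB'E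
    have hQfin : Q.Finite := hfin.subset hQE
    have hid := ES.ncard_symmdiff hQfin hTfin
    set A := M.E \ B' with hA
    have hAE : A ⊆ M.E := Set.diff_subset
    have haB' : a ∉ B' := fun h => haE (hB'E h)
    have hAcard : A.ncard = M.E.ncard - B'.ncard := Set.ncard_diff hB'E hB'fin
    rw [← hB'] at hid
    have hB'card : B'.ncard ≤ n - 2 := by omega
    have hB'lecard : B'.ncard ≤ M.E.ncard := Set.ncard_le_ncard hB'E hfin
    -- A-side: (0,1) not in span
    set F := (g.comp (LinearMap.fst (ZMod 2) W (ZMod 2))) +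
      LinearMap.snd (ZMod 2) W (ZMod 2) with hF
    have hFA : ∀ v ∈ splitRep φ T a '' A, F v = 0 := by
      rintro _ ⟨x, hx, rfl⟩
      have hxa : x ≠ a := fun h => haE (by rw [← h]; exact hAE hx)
      rw [ES.splitRep_mem hxa]
      simp only [hF, LinearMap.add_apply, LinearMap.comp_apply, LinearMap.fst_apply,
        LinearMap.snd_apply]
      have hgx : g (φ x) = (if x ∈ T then 1 else 0) := by
        by_cases hxT : x ∈ T
        · rw [if_pos hxT]
          apply (hg x (hAE hx)).mpr
          by_contra hxQ
          exact hx.2 (Or.inr ⟨hxT, hxQ⟩)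
        · rw [if_neg hxT]
          rcases ES.two_cases (g (φ x)) with h0 | h1
          · exact h0
          · exact absurd (Or.inl ⟨(hg x (hAE hx)).mp h1, hxT⟩) hx.2
      rw [hgx]
      split_ifs <;> decide
    have hnP : ((0 : W), (1 : ZMod 2)) ∉ span (ZMod 2) (splitRep φ T a '' A) := by
      intro hmem
      have hle : span (ZMod 2) (splitRep φ T a '' A) ≤ LinearMap.ker F :=
        span_le.mpr (fun v hv => hFA v hv)
      have h0 := hle hmem
      rw [LinearMap.mem_ker] at h0
      simp only [hF, LinearMap.add_apply, LinearMap.comp_apply, LinearMap.fst_apply,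
        LinearMap.snd_apply, map_zero, zero_add] at h0
      exact one_ne_zero h0
    -- the separation
    set k := B'.ncard + 1 with hk
    have hsep : IsKSeparation N k A (insert a B') := by
      refine ⟨?_, ?_, ?_, ?_, ?_⟩
      · rw [Set.union_comm A, Set.insert_union, hA, Set.union_diff_cancel hB'E, hNE]
      · rw [Set.disjoint_left]
        rintro x hxA (rfl | hxB')
        · exact haE (hAE hxA)
        · exact hxA.2 hxB'
      · omega
      · rw [Set.ncard_insert_of_notMem haB' hB'fin]
      · have h1 : mrank N A = Module.finrank (ZMod 2) (span (ZMod 2) (φ '' A)) := by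
          rw [ES.mrankN_subset hfin hN hAE, if_neg hnP, add_zero]
        have h2 : mrank N (insert a B')
            = Module.finrank (ZMod 2) (span (ZMod 2) (φ '' B')) + 1 :=
          ES.mrankN_insert hfin hN hB'E
        have h3 : mrank N N.E
            = Module.finrank (ZMod 2) (span (ZMod 2) (φ '' M.E)) + 1 := by
          rw [hNE]
          exact ES.mrankN_insert hfin hN (subset_refl _)
        have h4 := hrkE A hAE
        have h5 := ES.finrank_le_ncard (φ := φ) hB'fin
        omega
    exact hNconn k A (insert a B') (by omega) (by omega) hsep
  · -- backward direction
    intro hRHS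
    have main : ∀ (k : ℕ) (A B : Set α), a ∈ B → 1 ≤ k → k < n → ¬ IsKSeparation N k A B := by
      intro k A B haB hk1 hkn hsep
      obtain ⟨hunion, hdisj, hAcard, hBcard, hrank⟩ := hsep
      have haA : a ∉ A := Set.disjoint_right.mp hdisj haB
      have hAE : A ⊆ M.E := by
        intro x hxA
        have hx : x ∈ N.E := by rw [← hunion]; exact Or.inl hxA
        rw [hNE] at hx
        rcases hx with rfl | hx
        · exact absurd hxA haA
        · exact hx
      set B' := B \ {a} with hB'
      have hB'E : B' ⊆ M.E := by
        rintro x ⟨hxB, hxa⟩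
        have hx : x ∈ N.E := by rw [← hunion]; exact Or.inr hxB
        rw [hNE] at hx
        rcases hx with rfl | hx
        · exact absurd rfl hxa
        · exact hx
      have hBeq : B = insert a B' := by
        rw [hB', Set.insert_diff_singleton, Set.insert_eq_self.mpr haB]
      have haB' : a ∉ B' := fun h => h.2 rfl
      have hB'fin : B'.Finite := hfin.subset hB'E
      have hAfin : A.Finite := hfin.subset hAE
      have hBcard' : B.ncard = B'.ncard + 1 := by
        rw [hBeq, Set.ncard_insert_of_notMem haB' hB'fin]
      have hunion' : A ∪ B' = M.E := by
        apply Set.Subset.antisymm (Set.union_subset hAE hB'E)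
        intro x hxE
        have hx : x ∈ A ∪ B := by rw [hunion, hNE]; exact Or.inr hxE
        rcases hx with hx | hx
        · exact Or.inl hx
        · exact Or.inr ⟨hx, fun h => haE (by rw [← h]; exact hxE)⟩
      have hdisj' : Disjoint A B' := hdisj.mono_right (Set.diff_subset)
      -- rank rewrites
      have h2 : mrank N B = Module.finrank (ZMod 2) (span (ZMod 2) (φ '' B')) + 1 := by
        rw [hBeq]
        exact ES.mrankN_insert hfin hN hB'E
      have h3 : mrank N N.E
          = Module.finrank (ZMod 2) (span (ZMod 2) (φ '' M.E)) + 1 := by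
        rw [hNE]
        exact ES.mrankN_insert hfin hN (subset_refl _)
      have hsub : Module.finrank (ZMod 2) (span (ZMod 2) (φ '' M.E)) ≤
          Module.finrank (ZMod 2) (span (ZMod 2) (φ '' A)) +
            Module.finrank (ZMod 2) (span (ZMod 2) (φ '' B')) := by
        have := ES.finrank_union_le (φ := φ) hAfin hB'fin
        rwa [hunion'] at this
      have hrkM : ∀ X : Set α, X ⊆ M.E → mrank M X
          = Module.finrank (ZMod 2) (span (ZMod 2) (φ '' X)) :=
        fun X hX => ES.mrank_eq hM hX (hfin.subset hX)
      by_cases hP : ((0 : W), (1 : ZMod 2)) ∈ span (ZMod 2) (splitRep φ T a '' A)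
      · -- rank of A increases: (k-1)-separation of M
        have h1 : mrank N A = Module.finrank (ZMod 2) (span (ZMod 2) (φ '' A)) + 1 := by
          rw [ES.mrankN_subset hfin hN hAE, if_pos hP]
        have hk2 : 2 ≤ k := by
          rw [h1, h2, h3] at hrank
          omega
        refine hconn (k - 1) A B' (by omega) (by omega) ⟨hunion', hdisj', by omega, by omega, ?_⟩
        rw [hrkM A hAE, hrkM B' hB'E, hrkM M.E (subset_refl _)]
        rw [h1, h2, h3] at hrank
        omega
      · have h1 : mrank N A = Module.finrank (ZMod 2) (span (ZMod 2) (φ '' A)) := by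
          rw [ES.mrankN_subset hfin hN hAE, if_neg hP, add_zero]
        by_cases hB'k : k ≤ B'.ncard
        · -- k-separation of M
          refine hconn k A B' hk1 hkn ⟨hunion', hdisj', hAcard, hB'k, ?_⟩
          rw [hrkM A hAE, hrkM B' hB'E, hrkM M.E (subset_refl _)]
          rw [h1, h2, h3] at hrank
          omega
        · -- the cocycle argument
          have hB'k1 : B'.ncard = k - 1 := by omega
          obtain ⟨F, hF0, hF1⟩ := ES.exists_functional hP
          set gg := F.comp (LinearMap.inl (ZMod 2) W (ZMod 2)) with hgg
          set D := {x ∈ M.E | gg (φ x) = 1} with hD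
          have hDE : D ⊆ M.E := fun x hx => hx.1
          have hgD : ∀ x ∈ M.E, (gg (φ x) = 1 ↔ x ∈ D) :=
            fun x hx => ⟨fun h => ⟨hx, h⟩, fun h => h.2⟩
          have hDA : ∀ x ∈ A, (x ∈ D ↔ x ∈ T) := by
            intro x hxA
            have hxa : x ≠ a := fun h => haA (h ▸ hxA)
            have hFx : F (splitRep φ T a x) = 0 :=
              hF0 _ (Submodule.subset_span (Set.mem_image_of_mem _ hxA))
            rw [ES.splitRep_mem hxa] at hFx
            have hdecomp : ((φ x, if x ∈ T then 1 else 0) : W × ZMod 2)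
                = (φ x, 0) + (if x ∈ T then (1 : ZMod 2) else 0) • ((0 : W), (1 : ZMod 2)) := by
              split_ifs
              · rw [one_smul]
                exact Prod.ext (by rw [Prod.fst_add]; simp) (by rw [Prod.snd_add]; simp)
              · rw [zero_smul, add_zero]
            rw [hdecomp, map_add, map_smul, hF1] at hFx
            have hFinl : F ((φ x, 0) : W × ZMod 2) = gg (φ x) := by
              rw [hgg]
              rfl
            rw [hFinl] at hFx
            by_cases hxT : x ∈ T
            · rw [if_pos hxT] at hFx
              have : gg (φ x) = 1 := by
                rcases ES.two_cases (gg (φ x)) with h0 | h1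
                · rw [h0] at hFx
                  exact absurd hFx (by decide)
                · exact h1
              exact iff_of_true ((hgD x (hAE hxA)).mp this) hxT
            · rw [if_neg hxT] at hFx
              have : gg (φ x) = 0 := by
                rcases ES.two_cases (gg (φ x)) with h0 | h1
                · exact h0
                · rw [h1] at hFx
                  exact absurd hFx (by decide)
              refine iff_of_false (fun hxD => ?_) hxT
              rw [(hgD x (hAE hxA)).mpr hxD] at this
              exact one_ne_zero this
          have hbound := ES.cocycle_bound hM hfin hRHS D.ncard D rfl hDE ⟨gg, hgD⟩
          have hDfin : D.Finite := hfin.subset hDE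
          have hid := ES.ncard_symmdiff hDfin hTfin
          have hsubB' : (D \ T) ∪ (T \ D) ⊆ B' := by
            rintro x (⟨hxD, hxT⟩ | ⟨hxT, hxD⟩)
            · have hxE : x ∈ M.E := hDE hxD
              have hxA : x ∉ A := fun hxA => hxT ((hDA x hxA).mp hxD)
              have : x ∈ A ∪ B' := by rw [hunion']; exact hxE
              exact this.resolve_left hxA
            · have hxE : x ∈ M.E := hT hxT
              have hxA : x ∉ A := fun hxA => hxD ((hDA x hxA).mpr hxT)
              have : x ∈ A ∪ B' := by rw [hunion']; exact hxE
              exact this.resolve_left hxA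
          have hcard2 : ((D \ T) ∪ (T \ D)).ncard ≤ B'.ncard :=
            Set.ncard_le_ncard hsubB' hB'fin
          omega
    intro k A0 B0 hk1 hkn hsep0
    have haN : a ∈ A0 ∪ B0 := by
      rw [hsep0.1, hNE]
      exact Set.mem_insert _ _
    rcases haN with haA | haB
    · exact main k B0 A0 haA hk1 hkn (ES.sep_symm hsep0)
    · exact main k A0 B0 haB hk1 hkn hsep0
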